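/- The dual generating function identity holds: ∑_{x : |x|=N} multinomial(N;n^+)^{-1} multinomial(N;x) v_1^{x_1}⋯v_d^{x_d} Q_n(x;u) = (∑_{j=1}^d v_j)^{n_0} ∏_{i=1}^{d-1} (∑_{j=1}^d v_j u_j^{(i)})^{n_i}, where n_0 = N - |n|. -/

import Mathlib

open MvPolynomial

/-- Multivariate Krawtchouk polynomial `Q_n(x;u)`. -/
noncomputable def QK (d : ℕ) [NeZero d] (u : Fin d → Fin d → ℝ) (n x : Fin d → ℕ) : ℝ :=
  MvPolynomial.coeff (Finsupp.equivFunOnFinite.symm n)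
    (∏ j, (1 + ∑ l ∈ Finset.univ.erase 0, MvPolynomial.X l * MvPolynomial.C (u l j)) ^ x j)

/-- Dual generating function:
`∑_{|x|=N} multinomial(N;n⁺)⁻¹ multinomial(N;x) v₁^{x₁}⋯v_d^{x_d} Q_n(x;u)
  = (∑_j v_j)^{n₀} ∏_{i≠0} (∑_j v_j u_j^{(i)})^{n_i}` with `n₀ = N - |n|`. -/
theorem multivariate_krawtchouk_dual_gf
    (d N : ℕ) [NeZero d] (hd : 2 ≤ d)
    (u : Fin d → Fin d → ℝ)
    (n : Fin d → ℕ) (hn0 : n 0 = 0) (hn : ∑ j, n j ≤ N)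
    (v : Fin d → ℝ) :
    ∑ x ∈ Finset.Nat.antidiagonalTuple d N,
        ((Nat.multinomial Finset.univ
            (fun j => if j = 0 then N - ∑ i, n i else n j) : ℝ))⁻¹ *
          (Nat.multinomial Finset.univ x : ℝ) * (∏ j, v j ^ x j) * QK d u n x =
      (∑ j, v j) ^ (N - ∑ i, n i) *
        ∏ i ∈ Finset.univ.erase 0, (∑ j, v j * u i j) ^ n i := by
  classical
  set n' : Fin d →₀ ℕ := Finsupp.equivFunOnFinite.symm n with hn'
  set A : ℝ := ∑ j, v j with hA
  set B : Fin d → ℝ := fun l => ∑ j, v j * u l j with hB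
  set f : Fin d → MvPolynomial (Fin d) ℝ :=
    fun j => C (v j) * (1 + ∑ l ∈ Finset.univ.erase 0, X l * C (u l j)) with hf
  set g : Fin d → MvPolynomial (Fin d) ℝ :=
    fun l => if l = 0 then C A else X l * C (B l) with hg
  -- rearrange the sum
  have hfg : (∑ j, f j) = ∑ j, g j := by
    rw [← Finset.add_sum_erase Finset.univ g (Finset.mem_univ 0)]
    rw [show g 0 = C A from if_pos rfl]
    rw [Finset.sum_congr rfl (fun l hl =>
      show g l = X l * C (B l) from if_neg (Finset.ne_of_mem_erase hl))]
    simp only [hf, mul_add, mul_one, Finset.sum_add_distrib]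
    congr 1
    · rw [hA, map_sum]
    · simp only [Finset.mul_sum]
      rw [Finset.sum_comm]
      refine Finset.sum_congr rfl fun l _ => ?_
      rw [hB]
      rw [map_sum, Finset.mul_sum]
      refine Finset.sum_congr rfl fun j _ => ?_
      rw [map_mul]; ring
  -- LHS as a coefficient
  have key : MvPolynomial.coeff n' ((∑ j, f j) ^ N) =
      ∑ x ∈ Finset.Nat.antidiagonalTuple d N,
        (Nat.multinomial Finset.univ x : ℝ) * (∏ j, v j ^ x j) * QK d u n x := by
    rw [Finset.sum_pow_eq_sum_piAntidiag, Finset.piAntidiag_univ_fin_eq_antidiagonalTuple,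
      MvPolynomial.coeff_sum]
    refine Finset.sum_congr rfl fun x hx => ?_
    have h1 : ∏ j, f j ^ x j = C (∏ j, v j ^ x j) *
        ∏ j, (1 + ∑ l ∈ Finset.univ.erase 0, X l * C (u l j)) ^ x j := by
      rw [map_prod, ← Finset.prod_mul_distrib]
      refine Finset.prod_congr rfl fun j _ => ?_
      rw [hf, mul_pow, map_pow]
    rw [h1, ← MvPolynomial.C_eq_coe_nat, ← mul_assoc, ← map_mul,
      MvPolynomial.coeff_C_mul, QK]
  have h0 : ∑ l ∈ Finset.univ.erase 0, n l = ∑ i, n i := by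
    rw [← Finset.add_sum_erase Finset.univ n (Finset.mem_univ 0), hn0, zero_add]
  -- coefficient of a product of g's
  have hcoeff : ∀ y : Fin d → ℕ, MvPolynomial.coeff n' (∏ j, g j ^ y j) =
      if ∀ l ∈ Finset.univ.erase (0 : Fin d), y l = n l then
        A ^ y 0 * ∏ l ∈ Finset.univ.erase 0, B l ^ y l else 0 := by
    intro y
    have hmon : (MvPolynomial.monomial
          (∑ l ∈ Finset.univ.erase 0, Finsupp.single l (y l)) (1 : ℝ)) =
        ∏ l ∈ Finset.univ.erase (0 : Fin d), X l ^ y l := by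
      rw [MvPolynomial.monomial_sum_index, map_one, one_mul]
      exact Finset.prod_congr rfl fun l _ => (MvPolynomial.X_pow_eq_monomial).symm
    have h2 : ∏ j, g j ^ y j =
        C (A ^ y 0 * ∏ l ∈ Finset.univ.erase 0, B l ^ y l) *
          MvPolynomial.monomial (∑ l ∈ Finset.univ.erase 0, Finsupp.single l (y l)) 1 := by
      rw [← Finset.mul_prod_erase Finset.univ _ (Finset.mem_univ 0)]
      rw [show g 0 = C A from if_pos rfl]
      rw [Finset.prod_congr rfl (fun l hl =>
        show g l ^ y l = X l ^ y l * C (B l ^ y l) by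
          rw [show g l = X l * C (B l) from if_neg (Finset.ne_of_mem_erase hl),
            mul_pow, map_pow])]
      rw [Finset.prod_mul_distrib, ← map_prod, ← map_pow, hmon, map_mul]
      ring
    have hcond : ((∑ l ∈ Finset.univ.erase 0, Finsupp.single l (y l)) = n') ↔
        ∀ l ∈ Finset.univ.erase (0 : Fin d), y l = n l := by
      constructor
      · intro h l hl
        have h' := DFunLike.congr_fun h l
        rw [Finsupp.finset_sum_apply,
          Finset.sum_eq_single_of_mem l hl
            (fun b _ hb => Finsupp.single_eq_of_ne' hb),
          Finsupp.single_eq_same] at h'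
        simpa [hn'] using h'
      · intro h
        ext l
        rw [Finsupp.finset_sum_apply]
        by_cases hl : l = 0
        · subst hl
          rw [Finset.sum_eq_zero (fun b hb =>
            Finsupp.single_eq_of_ne' (Finset.ne_of_mem_erase hb))]
          simp [hn', hn0]
        · have hl' : l ∈ Finset.univ.erase (0 : Fin d) :=
            Finset.mem_erase.mpr ⟨hl, Finset.mem_univ l⟩
          rw [Finset.sum_eq_single_of_mem l hl'
            (fun b _ hb => Finsupp.single_eq_of_ne' hb), Finsupp.single_eq_same]
          simpa [hn'] using h l hl'
    rw [h2, MvPolynomial.coeff_C_mul, MvPolynomial.coeff_monomial]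
    by_cases hc : ∀ l ∈ Finset.univ.erase (0 : Fin d), y l = n l
    · rw [if_pos (hcond.mpr hc), if_pos hc, mul_one]
    · rw [if_neg (fun h => hc (hcond.mp h)), if_neg hc, mul_zero]
  -- the distinguished index
  set y₀ : Fin d → ℕ := fun j => if j = 0 then N - ∑ i, n i else n j with hy₀
  have hymem : y₀ ∈ Finset.Nat.antidiagonalTuple d N := by
    rw [Finset.Nat.mem_antidiagonalTuple,
      ← Finset.add_sum_erase Finset.univ y₀ (Finset.mem_univ 0)]
    rw [show y₀ 0 = N - ∑ i, n i from if_pos rfl]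
    rw [Finset.sum_congr rfl (fun l hl =>
      show y₀ l = n l from if_neg (Finset.ne_of_mem_erase hl)), h0]
    omega
  have key2 : MvPolynomial.coeff n' ((∑ j, g j) ^ N) =
      (Nat.multinomial Finset.univ y₀ : ℝ) *
        (A ^ (N - ∑ i, n i) * ∏ l ∈ Finset.univ.erase 0, B l ^ n l) := by
    rw [Finset.sum_pow_eq_sum_piAntidiag, Finset.piAntidiag_univ_fin_eq_antidiagonalTuple,
      MvPolynomial.coeff_sum]
    rw [Finset.sum_eq_single_of_mem y₀ hymem ?_]
    · rw [← MvPolynomial.C_eq_coe_nat, MvPolynomial.coeff_C_mul, hcoeff]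
      rw [if_pos (fun l hl => show y₀ l = n l from if_neg (Finset.ne_of_mem_erase hl))]
      rw [show y₀ 0 = N - ∑ i, n i from if_pos rfl]
      rw [Finset.prod_congr rfl (fun l hl => by
        rw [show y₀ l = n l from if_neg (Finset.ne_of_mem_erase hl)])]
    · intro b hb hne
      rw [← MvPolynomial.C_eq_coe_nat, MvPolynomial.coeff_C_mul, hcoeff b]
      rw [if_neg, mul_zero]
      intro hcb
      apply hne
      have hb' := Finset.Nat.mem_antidiagonalTuple.mp hb
      have hbe : ∑ l ∈ Finset.univ.erase 0, b l = ∑ i, n i := by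
        rw [Finset.sum_congr rfl (fun l hl => hcb l hl), h0]
      have hb0 : b 0 = N - ∑ i, n i := by
        rw [← Finset.add_sum_erase Finset.univ b (Finset.mem_univ 0), hbe] at hb'
        omega
      funext j
      by_cases hj : j = 0
      · subst hj; rw [show y₀ 0 = N - ∑ i, n i from if_pos rfl, hb0]
      · rw [show y₀ j = n j from if_neg hj,
          hcb j (Finset.mem_erase.mpr ⟨hj, Finset.mem_univ j⟩)]
  -- put everything together
  have hM : ((Nat.multinomial Finset.univ y₀ : ℝ)) ≠ 0 :=
    Nat.cast_ne_zero.mpr (Nat.multinomial_pos _ _).ne'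
  calc ∑ x ∈ Finset.Nat.antidiagonalTuple d N,
        ((Nat.multinomial Finset.univ y₀ : ℝ))⁻¹ *
          (Nat.multinomial Finset.univ x : ℝ) * (∏ j, v j ^ x j) * QK d u n x
      = ((Nat.multinomial Finset.univ y₀ : ℝ))⁻¹ *
          ∑ x ∈ Finset.Nat.antidiagonalTuple d N,
            (Nat.multinomial Finset.univ x : ℝ) * (∏ j, v j ^ x j) * QK d u n x := by
        rw [Finset.mul_sum]
        exact Finset.sum_congr rfl fun x _ => by ring
    _ = ((Nat.multinomial Finset.univ y₀ : ℝ))⁻¹ *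
          ((Nat.multinomial Finset.univ y₀ : ℝ) *
            (A ^ (N - ∑ i, n i) * ∏ l ∈ Finset.univ.erase 0, B l ^ n l)) := by
        rw [← key, hfg, key2]
    _ = A ^ (N - ∑ i, n i) * ∏ l ∈ Finset.univ.erase 0, B l ^ n l := by
        rw [inv_mul_cancel_left₀ hM]
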